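/- For every positive integer n, (n+1)(2n+1) divides 2·C(3n,n); equivalently, 2/((n+1)(2n+1))·C(3n,n) is a positive integer. -/
import Mathlib


theorem fighting_fish_count_is_pos_integer (n : ℕ) (hn : 0 < n) :
    (n + 1) * (2 * n + 1) ∣ 2 * Nat.choose (3 * n) n ∧
    0 < 2 * Nat.choose (3 * n) n / ((n + 1) * (2 * n + 1)) := by
  have hsucc : ∀ m : ℕ, Nat.Coprime (m + 1) m := by
    intro m
    have := (Nat.coprime_add_self_left (m := 1) (n := m)).mpr (Nat.coprime_one_left m)
    simpa [Nat.add_comm] using this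
  have hcop : Nat.Coprime (n + 1) (2 * n + 1) := by
    have h : 2 * n + 1 = n + (n + 1) := by ring
    rw [h, Nat.coprime_add_self_right]
    exact hsucc n
  -- (n+1) ∣ 2 * C(3n, n)
  have h1 : (n + 1) ∣ 2 * Nat.choose (3 * n) n := by
    have key := Nat.choose_succ_right_eq (3 * n) n
    have h3 : 3 * n - n = 2 * n := by omega
    rw [h3] at key
    have hd : (n + 1) ∣ Nat.choose (3 * n) n * (2 * n) :=
      Dvd.intro_left _ key
    have hd' : (n + 1) ∣ (2 * Nat.choose (3 * n) n) * n := by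
      have heq : Nat.choose (3 * n) n * (2 * n) = (2 * Nat.choose (3 * n) n) * n := by ring
      rwa [heq] at hd
    exact (hsucc n).dvd_of_dvd_mul_right hd'
  -- (2n+1) ∣ 2 * C(3n, n)
  have h2 : (2 * n + 1) ∣ 2 * Nat.choose (3 * n) n := by
    obtain ⟨m, rfl⟩ := Nat.exists_eq_succ_of_ne_zero hn.ne'
    have key := Nat.choose_succ_right_eq (3 * (m + 1)) m
    have h3 : 3 * (m + 1) - m = 2 * (m + 1) + 1 := by omega
    rw [h3] at key
    have hd : (2 * (m + 1) + 1) ∣ Nat.choose (3 * (m + 1)) (m + 1) * (m + 1) :=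
      ⟨_, by rw [key, Nat.mul_comm]⟩
    have hcop2 : Nat.Coprime (2 * (m + 1) + 1) (m + 1) := by
      have h : 2 * (m + 1) + 1 = (m + 2) + (m + 1) := by ring
      rw [h, Nat.coprime_add_self_left]
      exact hsucc (m + 1)
    exact Dvd.dvd.mul_left (hcop2.dvd_of_dvd_mul_right hd) 2
  have hdvd : (n + 1) * (2 * n + 1) ∣ 2 * Nat.choose (3 * n) n :=
    Nat.Coprime.mul_dvd_of_dvd_of_dvd hcop h1 h2
  have hpos : 0 < 2 * Nat.choose (3 * n) n := by
    have := Nat.choose_pos (show n ≤ 3 * n by omega)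
    omega
  exact ⟨hdvd, Nat.div_pos (Nat.le_of_dvd hpos hdvd) (by positivity)⟩
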